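/- For every n ≥ 4 and every x ∈ [0,1], the central moments of the second-order modified Durrmeyer operator satisfy D̃_n^{M,2}((t − x)^2; x) = 20x(1−x)/((n+2)(n+3)) − 3/((n+2)(n+3)) and D̃_n^{M,2}((t − x)^3; x) = 3(1 − 2x)(−4nx(1−x) − 48x^2 + 48x − 7)/((n+2)(n+3)(n+4)). -/

import Mathlib

open Filter Topology

/-- Bernstein basis polynomial `p_{n,k}(x)`, zero when `k < 0` or `k > n`. -/
noncomputable def bern (n : ℕ) (k : ℤ) (x : ℝ) : ℝ :=
  if 0 ≤ k ∧ k ≤ (n : ℤ) then (n.choose k.toNat : ℝ) * x ^ k.toNat * (1 - x) ^ (n - k.toNat)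
  else 0

/-- Second-order modified Bernstein basis `p̃_{n,k}^{M,2}(x)`. -/
noncomputable def pM2 (n : ℕ) (k : ℤ) (x : ℝ) : ℝ :=
  (((n : ℝ) - 2) * x ^ 2 - (n : ℝ) * x + 3 / 2) * bern (n - 2) k x
    + 2 * ((n : ℝ) - 2) * x * (1 - x) * bern (n - 2) (k - 1) x
    + (((n : ℝ) - 2) * x ^ 2 - ((n : ℝ) - 4) * x - 1 / 2) * bern (n - 2) (k - 2) x

/-- Second-order modified Durrmeyer operator `D̃_n^{M,2}(f;x)`. -/
noncomputable def DM2 (n : ℕ) (f : ℝ → ℝ) (x : ℝ) : ℝ :=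
  ((n : ℝ) + 1) * ∑ k ∈ Finset.range (n + 1),
    pM2 n k x * ∫ t in (0:ℝ)..1, bern n k t * f t


lemma beta_nat (a b : ℕ) : ∫ t in (0:ℝ)..1, t^a * (1-t)^b
    = (a.factorial : ℝ) * b.factorial / (a+b+1).factorial := by
  induction b generalizing a with
  | zero =>
    simp only [pow_zero, mul_one, integral_pow, Nat.factorial_zero, Nat.cast_one,
      Nat.add_zero, Nat.factorial_succ, Nat.cast_mul]
    push_cast
    rw [one_pow, zero_pow (by omega), sub_zero]
    rw [eq_div_iff (by positivity)]
    field_simp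
  | succ b ih =>
    have hu : ∀ t ∈ Set.uIcc (0:ℝ) 1, HasDerivAt (fun t : ℝ => (1-t)^(b+1))
        (-((b+1) * (1-t)^b)) t := by
      intro t _
      have h1 : HasDerivAt (fun t : ℝ => 1 - t) (-1) t := by
        simpa using (hasDerivAt_id t).const_sub 1
      have := h1.fun_pow (b+1)
      simpa [mul_comm, mul_assoc, mul_left_comm] using this
    have hv : ∀ t ∈ Set.uIcc (0:ℝ) 1, HasDerivAt (fun t : ℝ => t^(a+1)/(a+1))
        (t^a) t := by
      intro t _
      have := (hasDerivAt_pow (a+1) t).div_const ((a:ℝ)+1)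
      have ha : ((a:ℝ)+1) ≠ 0 := by positivity
      convert this using 1
      push_cast
      exacts [rfl, rfl, by field_simp; simp; ring]
    have hiu : IntervalIntegrable (fun t : ℝ => -(((b:ℝ)+1) * (1-t)^b))
        MeasureTheory.volume 0 1 := by
      apply Continuous.intervalIntegrable; fun_prop
    have hiv : IntervalIntegrable (fun t : ℝ => t^a) MeasureTheory.volume 0 1 := by
      apply Continuous.intervalIntegrable; fun_prop
    have ibp := intervalIntegral.integral_mul_deriv_eq_deriv_mul hu hv hiu hiv
    have h1 : (∫ t in (0:ℝ)..1, (1-t)^(b+1) * t^a) = ∫ t in (0:ℝ)..1, t^a * (1-t)^(b+1) := by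
      apply intervalIntegral.integral_congr; intro t _; ring
    have h2 : (∫ t in (0:ℝ)..1, -(((b:ℝ)+1) * (1-t)^b) * (t^(a+1)/(a+1)))
        = (-((b:ℝ)+1)/(a+1)) * ∫ t in (0:ℝ)..1, t^(a+1) * (1-t)^b := by
      rw [← intervalIntegral.integral_const_mul]
      apply intervalIntegral.integral_congr; intro t _; field_simp
    rw [h1, h2] at ibp
    rw [ibp, ih (a+1)]
    simp only [show a+1+b+1 = (a+b+1)+1 from by omega,
      show a+(b+1)+1 = (a+b+1)+1 from by omega, Nat.factorial_succ]
    have h3 : (a:ℝ)+1 ≠ 0 := by positivity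
    have h4 : ((a+b+1).factorial : ℝ) ≠ 0 := by positivity
    push_cast
    rw [one_pow, zero_pow (by omega), sub_zero]
    field_simp
    ring


lemma bern_nat (n k : ℕ) (hk : k ≤ n) (x : ℝ) :
    bern n (k : ℤ) x = (n.choose k : ℝ) * x ^ k * (1 - x) ^ (n - k) := by
  rw [bern, if_pos ⟨Int.natCast_nonneg k, by exact_mod_cast hk⟩, Int.toNat_natCast]

lemma bern_zero {n : ℕ} {k : ℤ} (h : k < 0 ∨ (n:ℤ) < k) (x : ℝ) : bern n k x = 0 := by
  rw [bern, if_neg (by omega)]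

lemma key_nat (m i j : ℕ) (h : i + j ≤ m) :
    m.choose (i+j) * (i+j).descFactorial i = m.descFactorial i * (m-i).choose j := by
  have hp : 0 < j.factorial * (m-i-j).factorial := by positivity
  apply Nat.eq_of_mul_eq_mul_right hp
  have e1 : (i+j).descFactorial i * j.factorial = (i+j).factorial := by
    have := Nat.factorial_mul_descFactorial (show i ≤ i + j by omega)
    rw [show i + j - i = j from by omega] at this
    rw [mul_comm]; exact this
  have e2 : m.choose (i+j) * (i+j).factorial * (m-(i+j)).factorial = m.factorial :=
    Nat.choose_mul_factorial_mul_factorial h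
  have e3 : (m-i).choose j * j.factorial * (m-i-j).factorial = (m-i).factorial :=
    Nat.choose_mul_factorial_mul_factorial (by omega)
  have e4 : (m-i).factorial * m.descFactorial i = m.factorial :=
    Nat.factorial_mul_descFactorial (by omega)
  calc m.choose (i+j) * (i+j).descFactorial i * (j.factorial * (m-i-j).factorial)
      = m.choose (i+j) * ((i+j).descFactorial i * j.factorial) * (m-i-j).factorial := by ring
    _ = m.choose (i+j) * (i+j).factorial * (m-(i+j)).factorial := by
        rw [e1, show m-i-j = m-(i+j) from by omega]
    _ = m.factorial := e2
    _ = (m-i).factorial * m.descFactorial i := e4.symm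
    _ = (m.descFactorial i * (m-i).choose j) * (j.factorial * (m-i-j).factorial) := by
        rw [← e3]; ring

lemma moment (m i : ℕ) (x : ℝ) :
    ∑ k ∈ Finset.range (m+1), bern m (k : ℤ) x * (k.descFactorial i : ℝ)
      = (m.descFactorial i : ℝ) * x ^ i := by
  by_cases him : i ≤ m
  · have hstep : ∀ k ∈ Finset.range (m+1),
        bern m (k : ℤ) x * (k.descFactorial i : ℝ)
        = if k ∈ Finset.Ico i (m+1) then bern m (k:ℤ) x * (k.descFactorial i : ℝ) else 0 := by
      intro k hk
      by_cases hki : i ≤ k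
      · rw [if_pos (Finset.mem_Ico.mpr ⟨hki, Finset.mem_range.mp hk⟩)]
      · rw [if_neg (by simp [Finset.mem_Ico]; omega)]
        rw [Nat.descFactorial_eq_zero_iff_lt.mpr (by omega)]
        simp
    rw [Finset.sum_congr rfl hstep, Finset.sum_ite_mem,
      Finset.inter_eq_right.mpr (by
        intro k hk
        obtain ⟨h1, h2⟩ := Finset.mem_Ico.mp hk
        exact Finset.mem_range.mpr h2)]
    rw [Finset.sum_Ico_eq_sum_range]
    have hterm : ∀ j ∈ Finset.range (m+1-i),
        bern m ((i+j : ℕ) : ℤ) x * ((i+j).descFactorial i : ℝ)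
        = ((m.descFactorial i : ℝ) * x^i) * (((m-i).choose j : ℝ) * x^j * (1-x)^((m-i)-j)) := by
      intro j hj
      have hj' : i + j ≤ m := by simp at hj; omega
      rw [bern_nat m (i+j) hj' x]
      have := key_nat m i j hj'
      have hc : (m.choose (i+j) : ℝ) * ((i+j).descFactorial i : ℝ)
          = (m.descFactorial i : ℝ) * ((m-i).choose j : ℝ) := by exact_mod_cast congrArg Nat.cast this
      rw [show m - (i+j) = (m-i)-j from by omega, pow_add]
      linear_combination (x^i * x^j * (1-x)^((m-i)-j)) * hc
    rw [Finset.sum_congr rfl hterm, ← Finset.mul_sum]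
    have hbin : ∑ j ∈ Finset.range (m+1-i), ((m-i).choose j : ℝ) * x^j * (1-x)^((m-i)-j) = 1 := by
      have h := add_pow x (1-x) (m-i)
      rw [show x + (1-x) = 1 from by ring, one_pow, show m-i+1 = m+1-i from by omega] at h
      calc ∑ j ∈ Finset.range (m+1-i), ((m-i).choose j : ℝ) * x^j * (1-x)^((m-i)-j)
          = ∑ j ∈ Finset.range (m+1-i), x^j * (1-x)^((m-i)-j) * ((m-i).choose j : ℝ) :=
            Finset.sum_congr rfl (fun j _ => by ring)
        _ = 1 := h.symm
    rw [hbin, mul_one]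
  · rw [Nat.descFactorial_eq_zero_iff_lt.mpr (by omega)]
    rw [Finset.sum_eq_zero]
    · simp
    · intro k hk
      rw [Nat.descFactorial_eq_zero_iff_lt.mpr (by simp at hk; omega)]
      simp

lemma descR1 (k : ℕ) : ((k.descFactorial 1 : ℕ) : ℝ) = (k:ℝ) := by simp

lemma descR2 (k : ℕ) : ((k.descFactorial 2 : ℕ) : ℝ) = (k:ℝ) * ((k:ℝ) - 1) := by
  match k with
  | 0 => simp
  | 1 => simp [Nat.descFactorial]
  | (k+2) => simp [Nat.descFactorial]; push_cast; ring

lemma descR3 (k : ℕ) : ((k.descFactorial 3 : ℕ) : ℝ) = (k:ℝ) * ((k:ℝ) - 1) * ((k:ℝ) - 2) := by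
  match k with
  | 0 => simp
  | 1 => simp [Nat.descFactorial]
  | 2 => simp [Nat.descFactorial]
  | (k+3) => simp [Nat.descFactorial]; push_cast; ring

lemma sum_bern_cubic (m : ℕ) (x c0 c1 c2 c3 : ℝ) :
    ∑ k ∈ Finset.range (m+1), bern m (k : ℤ) x * (c0 + c1*(k:ℝ) + c2*(k:ℝ)^2 + c3*(k:ℝ)^3)
    = c0 + c1*((m:ℝ)*x) + c2*((m:ℝ)*x + (m:ℝ)*((m:ℝ)-1)*x^2)
      + c3*((m:ℝ)*x + 3*(m:ℝ)*((m:ℝ)-1)*x^2 + (m:ℝ)*((m:ℝ)-1)*((m:ℝ)-2)*x^3) := by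
  have hstep : ∀ k ∈ Finset.range (m+1),
      bern m (k : ℤ) x * (c0 + c1*(k:ℝ) + c2*(k:ℝ)^2 + c3*(k:ℝ)^3)
      = c0 * (bern m (k:ℤ) x * (k.descFactorial 0 : ℝ))
        + (c1 + c2 + c3) * (bern m (k:ℤ) x * (k.descFactorial 1 : ℝ))
        + (c2 + 3*c3) * (bern m (k:ℤ) x * (k.descFactorial 2 : ℝ))
        + c3 * (bern m (k:ℤ) x * (k.descFactorial 3 : ℝ)) := by
    intro k _
    rw [descR1, descR2, descR3, Nat.descFactorial_zero]
    push_cast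
    ring
  rw [Finset.sum_congr rfl hstep]
  simp only [Finset.sum_add_distrib, ← Finset.mul_sum, moment]
  rw [descR1, descR2, descR3, Nat.descFactorial_zero]
  push_cast
  ring

lemma sum_shift (m s : ℕ) (hs : s ≤ 2) (x : ℝ) (g : ℕ → ℝ) :
    ∑ k ∈ Finset.range (m+3), bern m ((k:ℤ) - (s:ℤ)) x * g k
    = ∑ k ∈ Finset.range (m+1), bern m (k:ℤ) x * g (k+s) := by
  have h1 : ∀ k ∈ Finset.range (m+1),
      bern m (k:ℤ) x * g (k+s) = bern m ((↑(s+k):ℤ) - (s:ℤ)) x * g (s+k) := by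
    intro k _
    congr 1
    · congr 1; push_cast; ring
    · congr 1; omega
  rw [Finset.sum_congr rfl h1]
  have h2 : ∑ k ∈ Finset.range (m+1), bern m ((↑(s+k):ℤ) - (s:ℤ)) x * g (s+k)
      = ∑ k ∈ Finset.Ico s (s+(m+1)), bern m ((k:ℤ) - (s:ℤ)) x * g k := by
    rw [Finset.sum_Ico_eq_sum_range]
    simp only [show s+(m+1)-s = m+1 from by omega]
  rw [h2]
  apply (Finset.sum_subset ?_ ?_).symm
  · intro k hk
    simp only [Finset.mem_Ico] at hk
    exact Finset.mem_range.mpr (by omega)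
  · intro k hk hk'
    simp only [Finset.mem_range] at hk
    simp only [Finset.mem_Ico, not_and, not_lt] at hk'
    have : ((k:ℤ) - s < 0) ∨ ((m:ℤ) < (k:ℤ) - s) := by omega
    rw [bern_zero this, zero_mul]

lemma fact_ratio (n k j : ℕ) (hk : k ≤ n) :
    ((n:ℝ)+1) * (n.choose k : ℝ) * (((k+j).factorial : ℝ) * ((n-k).factorial : ℝ) / ((n+j+1).factorial : ℝ))
    = (∏ i ∈ Finset.range j, ((k:ℝ)+1+i)) / (∏ i ∈ Finset.range j, ((n:ℝ)+2+i)) := by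
  induction j with
  | zero =>
    simp only [Nat.add_zero, Finset.range_zero, Finset.prod_empty]
    have e1 : (n.choose k : ℝ) * (k.factorial : ℝ) * ((n-k).factorial : ℝ) = (n.factorial : ℝ) := by
      exact_mod_cast congrArg Nat.cast (Nat.choose_mul_factorial_mul_factorial hk)
    have e3 : ((n+1).factorial : ℝ) = ((n:ℝ)+1) * (n.factorial : ℝ) := by
      rw [Nat.factorial_succ]; push_cast; ring
    rw [e3]
    have h1 : (n.factorial : ℝ) ≠ 0 := by positivity
    have h2 : ((n:ℝ)+1) ≠ 0 := by positivity
    field_simp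
    linear_combination e1
  | succ j ih =>
    have e1 : ((k+(j+1)).factorial : ℝ) = ((k:ℝ)+j+1) * ((k+j).factorial : ℝ) := by
      rw [show k+(j+1) = (k+j)+1 from by omega, Nat.factorial_succ]; push_cast; ring
    have e2 : ((n+(j+1)+1).factorial : ℝ) = ((n:ℝ)+j+2) * ((n+j+1).factorial : ℝ) := by
      rw [show n+(j+1)+1 = (n+j+1)+1 from by omega, Nat.factorial_succ]; push_cast; ring
    rw [e1, e2, Finset.prod_range_succ, Finset.prod_range_succ]
    have h1 : ((n+j+1).factorial : ℝ) ≠ 0 := by positivity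
    have h2 : ((n:ℝ)+j+2) ≠ 0 := by positivity
    have h3 : (∏ i ∈ Finset.range j, ((n:ℝ)+2+i)) ≠ 0 := by
      apply Finset.prod_ne_zero_iff.mpr; intro i _; positivity
    calc ((n:ℝ)+1) * (n.choose k : ℝ) * (((k:ℝ)+j+1) * ((k+j).factorial:ℝ) * ((n-k).factorial:ℝ)
            / (((n:ℝ)+j+2) * ((n+j+1).factorial:ℝ)))
        = (((n:ℝ)+1) * (n.choose k:ℝ) * (((k+j).factorial:ℝ) * ((n-k).factorial:ℝ) / ((n+j+1).factorial:ℝ)))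
            * (((k:ℝ)+j+1) / ((n:ℝ)+j+2)) := by
          field_simp
      _ = ((∏ i ∈ Finset.range j, ((k:ℝ)+1+i)) / (∏ i ∈ Finset.range j, ((n:ℝ)+2+i)))
            * (((k:ℝ)+j+1) / ((n:ℝ)+j+2)) := by rw [ih]
      _ = (∏ i ∈ Finset.range j, ((k:ℝ)+1+i)) * ((k:ℝ)+1+j)
            / ((∏ i ∈ Finset.range j, ((n:ℝ)+2+i)) * ((n:ℝ)+2+j)) := by
          field_simp; ring

lemma cbeta (n k j : ℕ) (hk : k ≤ n) :
    ((n:ℝ)+1) * ((n.choose k : ℝ) * ∫ t in (0:ℝ)..1, t^(k+j)*(1-t)^(n-k))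
    = (∏ i ∈ Finset.range j, ((k:ℝ)+1+i)) / (∏ i ∈ Finset.range j, ((n:ℝ)+2+i)) := by
  rw [beta_nat, show (k+j)+(n-k)+1 = n+j+1 from by omega, ← fact_ratio n k j hk]
  ring

lemma hint_aux (n k j : ℕ) : IntervalIntegrable (fun t:ℝ => t^(k+j)*(1-t)^(n-k))
    MeasureTheory.volume 0 1 := by
  apply Continuous.intervalIntegrable; fun_prop

lemma integ2 (n k : ℕ) (hk : k ≤ n) (x : ℝ) :
    ((n:ℝ)+1) * ∫ t in (0:ℝ)..1, bern n (k:ℤ) t * (t-x)^2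
    = ((k:ℝ)+1)*((k:ℝ)+2)/(((n:ℝ)+2)*((n:ℝ)+3)) - 2*x*(((k:ℝ)+1)/((n:ℝ)+2)) + x^2 := by
  have hsplit : (∫ t in (0:ℝ)..1, bern n (k:ℤ) t * (t-x)^2)
      = (n.choose k:ℝ) * (∫ t in (0:ℝ)..1, t^(k+2)*(1-t)^(n-k))
        + ((-(2*x))*(n.choose k:ℝ)) * (∫ t in (0:ℝ)..1, t^(k+1)*(1-t)^(n-k))
        + (x^2*(n.choose k:ℝ)) * (∫ t in (0:ℝ)..1, t^(k+0)*(1-t)^(n-k)) := by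
    rw [← intervalIntegral.integral_const_mul, ← intervalIntegral.integral_const_mul,
      ← intervalIntegral.integral_const_mul,
      ← intervalIntegral.integral_add ((hint_aux n k 2).const_mul _) ((hint_aux n k 1).const_mul _),
      ← intervalIntegral.integral_add (((hint_aux n k 2).const_mul _).add
        ((hint_aux n k 1).const_mul _)) ((hint_aux n k 0).const_mul _)]
    apply intervalIntegral.integral_congr
    intro t _
    show bern n (k:ℤ) t * (t-x)^2 = _
    rw [bern_nat n k hk t]
    ring
  rw [hsplit]
  have h0 := cbeta n k 0 hk
  have h1 := cbeta n k 1 hk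
  have h2 := cbeta n k 2 hk
  simp only [Finset.prod_range_succ, Finset.prod_range_zero, Nat.cast_zero, Nat.cast_one] at h0 h1 h2
  linear_combination h2 - 2*x*h1 + x^2*h0

lemma integ3 (n k : ℕ) (hk : k ≤ n) (x : ℝ) :
    ((n:ℝ)+1) * ∫ t in (0:ℝ)..1, bern n (k:ℤ) t * (t-x)^3
    = ((k:ℝ)+1)*((k:ℝ)+2)*((k:ℝ)+3)/(((n:ℝ)+2)*((n:ℝ)+3)*((n:ℝ)+4))
      - 3*x*(((k:ℝ)+1)*((k:ℝ)+2)/(((n:ℝ)+2)*((n:ℝ)+3)))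
      + 3*x^2*(((k:ℝ)+1)/((n:ℝ)+2)) - x^3 := by
  have hsplit : (∫ t in (0:ℝ)..1, bern n (k:ℤ) t * (t-x)^3)
      = (n.choose k:ℝ) * (∫ t in (0:ℝ)..1, t^(k+3)*(1-t)^(n-k))
        + ((-(3*x))*(n.choose k:ℝ)) * (∫ t in (0:ℝ)..1, t^(k+2)*(1-t)^(n-k))
        + ((3*x^2)*(n.choose k:ℝ)) * (∫ t in (0:ℝ)..1, t^(k+1)*(1-t)^(n-k))
        + ((-(x^3))*(n.choose k:ℝ)) * (∫ t in (0:ℝ)..1, t^(k+0)*(1-t)^(n-k)) := by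
    rw [← intervalIntegral.integral_const_mul, ← intervalIntegral.integral_const_mul,
      ← intervalIntegral.integral_const_mul, ← intervalIntegral.integral_const_mul,
      ← intervalIntegral.integral_add ((hint_aux n k 3).const_mul _) ((hint_aux n k 2).const_mul _),
      ← intervalIntegral.integral_add (((hint_aux n k 3).const_mul _).add
        ((hint_aux n k 2).const_mul _)) ((hint_aux n k 1).const_mul _),
      ← intervalIntegral.integral_add ((((hint_aux n k 3).const_mul _).add
        ((hint_aux n k 2).const_mul _)).add ((hint_aux n k 1).const_mul _))
        ((hint_aux n k 0).const_mul _)]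
    apply intervalIntegral.integral_congr
    intro t _
    show bern n (k:ℤ) t * (t-x)^3 = _
    rw [bern_nat n k hk t]
    ring
  rw [hsplit]
  have h0 := cbeta n k 0 hk
  have h1 := cbeta n k 1 hk
  have h2 := cbeta n k 2 hk
  have h3 := cbeta n k 3 hk
  simp only [Finset.prod_range_succ, Finset.prod_range_zero, Nat.cast_zero, Nat.cast_one,
    Nat.cast_ofNat] at h0 h1 h2 h3
  linear_combination h3 - 3*x*h2 + 3*x^2*h1 - x^3*h0



set_option maxHeartbeats 2000000 in
lemma main2 (m : ℕ) (x : ℝ) :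
    DM2 (m+2) (fun t => (t-x)^2) x
    = 20*x*(1-x)/(((m:ℝ)+4)*((m:ℝ)+5)) - 3/(((m:ℝ)+4)*((m:ℝ)+5)) := by
  have hu : ((m:ℝ)+4) ≠ 0 := by positivity
  have hv : ((m:ℝ)+5) ≠ 0 := by positivity
  set g : ℕ → ℝ := fun k =>
    ((k:ℝ)+1)*((k:ℝ)+2)/(((m:ℝ)+4)*((m:ℝ)+5)) - 2*x*(((k:ℝ)+1)/((m:ℝ)+4)) + x^2 with hg
  have step1 : DM2 (m+2) (fun t => (t-x)^2) x
      = ∑ k ∈ Finset.range (m+3), pM2 (m+2) (k:ℤ) x * g k := by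
    rw [DM2, Finset.mul_sum]
    apply Finset.sum_congr rfl
    intro k hk
    have hk' : k ≤ m+2 := by simp at hk; omega
    have h := integ2 (m+2) k hk' x
    calc ((↑(m+2):ℝ)+1) * (pM2 (m+2) (k:ℤ) x * ∫ t in (0:ℝ)..1, bern (m+2) (k:ℤ) t * (t-x)^2)
        = pM2 (m+2) (k:ℤ) x * (((↑(m+2):ℝ)+1) * ∫ t in (0:ℝ)..1, bern (m+2) (k:ℤ) t * (t-x)^2) := by
          ring
      _ = pM2 (m+2) (k:ℤ) x * g k := by
          rw [h, hg]
          push_cast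
          ring_nf
  have hA : ∀ k ∈ Finset.range (m+3), pM2 (m+2) (k:ℤ) x * g k
      = (((m:ℝ))*x^2 - ((m:ℝ)+2)*x + 3/2) * (bern m ((k:ℤ) - ((0:ℕ):ℤ)) x * g k)
        + (2*(m:ℝ)*x*(1-x)) * (bern m ((k:ℤ) - ((1:ℕ):ℤ)) x * g k)
        + ((m:ℝ)*x^2 - ((m:ℝ)-2)*x - 1/2) * (bern m ((k:ℤ) - ((2:ℕ):ℤ)) x * g k) := by
    intro k _
    simp only [pM2, show m+2-2 = m from by omega]
    push_cast
    ring
  rw [step1, Finset.sum_congr rfl hA]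
  simp only [Finset.sum_add_distrib]
  rw [← Finset.mul_sum, ← Finset.mul_sum, ← Finset.mul_sum,
    sum_shift m 0 (by omega) x g, sum_shift m 1 (by omega) x g, sum_shift m 2 (by omega) x g]
  have hgs : ∀ s : ℕ, ∀ k ∈ Finset.range (m+1),
      bern m (k:ℤ) x * g (k+s)
      = bern m (k:ℤ) x * ((((s:ℝ)+1)*((s:ℝ)+2)/(((m:ℝ)+4)*((m:ℝ)+5)) - 2*x*((s:ℝ)+1)/((m:ℝ)+4) + x^2)
          + ((2*(s:ℝ)+3)/(((m:ℝ)+4)*((m:ℝ)+5)) - 2*x/((m:ℝ)+4))*(k:ℝ)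
          + (1/(((m:ℝ)+4)*((m:ℝ)+5)))*(k:ℝ)^2 + 0*(k:ℝ)^3) := by
    intro s k _
    congr 1
    rw [hg]
    push_cast
    field_simp
    ring
  rw [Finset.sum_congr rfl (hgs 0), Finset.sum_congr rfl (hgs 1), Finset.sum_congr rfl (hgs 2),
    sum_bern_cubic, sum_bern_cubic, sum_bern_cubic]
  push_cast
  field_simp
  ring

set_option maxHeartbeats 2000000 in
lemma main3 (m : ℕ) (x : ℝ) :
    DM2 (m+2) (fun t => (t-x)^3) x
    = 3*(1-2*x)*(-(4*((m:ℝ)+2)*x*(1-x)) - 48*x^2 + 48*x - 7)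
        /(((m:ℝ)+4)*((m:ℝ)+5)*((m:ℝ)+6)) := by
  have hu : ((m:ℝ)+4) ≠ 0 := by positivity
  have hv : ((m:ℝ)+5) ≠ 0 := by positivity
  have hw : ((m:ℝ)+6) ≠ 0 := by positivity
  set g : ℕ → ℝ := fun k =>
    ((k:ℝ)+1)*((k:ℝ)+2)*((k:ℝ)+3)/(((m:ℝ)+4)*((m:ℝ)+5)*((m:ℝ)+6))
      - 3*x*(((k:ℝ)+1)*((k:ℝ)+2)/(((m:ℝ)+4)*((m:ℝ)+5)))
      + 3*x^2*(((k:ℝ)+1)/((m:ℝ)+4)) - x^3 with hg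
  have step1 : DM2 (m+2) (fun t => (t-x)^3) x
      = ∑ k ∈ Finset.range (m+3), pM2 (m+2) (k:ℤ) x * g k := by
    rw [DM2, Finset.mul_sum]
    apply Finset.sum_congr rfl
    intro k hk
    have hk' : k ≤ m+2 := by simp at hk; omega
    have h := integ3 (m+2) k hk' x
    calc ((↑(m+2):ℝ)+1) * (pM2 (m+2) (k:ℤ) x * ∫ t in (0:ℝ)..1, bern (m+2) (k:ℤ) t * (t-x)^3)
        = pM2 (m+2) (k:ℤ) x * (((↑(m+2):ℝ)+1) * ∫ t in (0:ℝ)..1, bern (m+2) (k:ℤ) t * (t-x)^3) := by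
          ring
      _ = pM2 (m+2) (k:ℤ) x * g k := by
          rw [h, hg]
          push_cast
          ring_nf
  have hA : ∀ k ∈ Finset.range (m+3), pM2 (m+2) (k:ℤ) x * g k
      = (((m:ℝ))*x^2 - ((m:ℝ)+2)*x + 3/2) * (bern m ((k:ℤ) - ((0:ℕ):ℤ)) x * g k)
        + (2*(m:ℝ)*x*(1-x)) * (bern m ((k:ℤ) - ((1:ℕ):ℤ)) x * g k)
        + ((m:ℝ)*x^2 - ((m:ℝ)-2)*x - 1/2) * (bern m ((k:ℤ) - ((2:ℕ):ℤ)) x * g k) := by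
    intro k _
    simp only [pM2, show m+2-2 = m from by omega]
    push_cast
    ring
  rw [step1, Finset.sum_congr rfl hA]
  simp only [Finset.sum_add_distrib]
  rw [← Finset.mul_sum, ← Finset.mul_sum, ← Finset.mul_sum,
    sum_shift m 0 (by omega) x g, sum_shift m 1 (by omega) x g, sum_shift m 2 (by omega) x g]
  have hgs : ∀ s : ℕ, ∀ k ∈ Finset.range (m+1),
      bern m (k:ℤ) x * g (k+s)
      = bern m (k:ℤ) x * (
          (((s:ℝ)+1)*((s:ℝ)+2)*((s:ℝ)+3)/(((m:ℝ)+4)*((m:ℝ)+5)*((m:ℝ)+6))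
            - 3*x*((s:ℝ)+1)*((s:ℝ)+2)/(((m:ℝ)+4)*((m:ℝ)+5)) + 3*x^2*((s:ℝ)+1)/((m:ℝ)+4) - x^3)
          + ((3*(s:ℝ)^2+12*(s:ℝ)+11)/(((m:ℝ)+4)*((m:ℝ)+5)*((m:ℝ)+6))
            - 3*x*(2*(s:ℝ)+3)/(((m:ℝ)+4)*((m:ℝ)+5)) + 3*x^2/((m:ℝ)+4))*(k:ℝ)
          + ((3*(s:ℝ)+6)/(((m:ℝ)+4)*((m:ℝ)+5)*((m:ℝ)+6)) - 3*x/(((m:ℝ)+4)*((m:ℝ)+5)))*(k:ℝ)^2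
          + (1/(((m:ℝ)+4)*((m:ℝ)+5)*((m:ℝ)+6)))*(k:ℝ)^3) := by
    intro s k _
    congr 1
    rw [hg]
    push_cast
    field_simp
    ring
  rw [Finset.sum_congr rfl (hgs 0), Finset.sum_congr rfl (hgs 1), Finset.sum_congr rfl (hgs 2),
    sum_bern_cubic, sum_bern_cubic, sum_bern_cubic]
  push_cast
  field_simp
  ring

theorem DM2_central_moments (n : ℕ) (hn : 4 ≤ n) (x : ℝ) (hx : x ∈ Set.Icc (0:ℝ) 1) :
    DM2 n (fun t => (t - x) ^ 2) x
      = 20 * x * (1 - x) / (((n : ℝ) + 2) * ((n : ℝ) + 3))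
        - 3 / (((n : ℝ) + 2) * ((n : ℝ) + 3)) ∧
    DM2 n (fun t => (t - x) ^ 3) x
      = 3 * (1 - 2 * x) * (-(4 * (n : ℝ) * x * (1 - x)) - 48 * x ^ 2 + 48 * x - 7)
          / (((n : ℝ) + 2) * ((n : ℝ) + 3) * ((n : ℝ) + 4)) := by
  obtain ⟨m, rfl⟩ : ∃ m, n = m + 2 := ⟨n - 2, by omega⟩
  constructor
  · rw [main2]
    push_cast
    ring_nf
  · rw [main3]
    push_cast
    ring_nf
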